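/- arXiv:2111.02155 — 6 statements merged into one kernel-verified Lean document; each statement's English description precedes it below -/
import Mathlib

section
/- For every $\rho \in [-1, 1]$, the function $\widehat{R}(\rho) := \frac{\sqrt{1-\rho^2} + (\pi - \cos^{-1}(\rho))\rho}{\pi}$ satisfies $\rho \leq \widehat{R}(\rho)$, with equality if and only if $\rho = 1$. -/
open Real

lemma key_sin {θ : ℝ} (h0 : 0 < θ) (hπ : θ ≤ π) : θ * Real.cos θ < Real.sin θ := by
  rcases lt_or_ge θ (π / 2) with h | h
  · have hc : 0 < Real.cos θ := Real.cos_pos_of_mem_Ioo ⟨by linarith [Real.pi_pos], h⟩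
    have ht := Real.lt_tan h0 h
    rw [Real.tan_eq_sin_div_cos, lt_div_iff₀ hc] at ht
    linarith
  · have hc : Real.cos θ ≤ 0 :=
      Real.cos_nonpos_of_pi_div_two_le_of_le h (by linarith [Real.pi_pos])
    rcases lt_or_eq_of_le hπ with h' | h'
    · have hs : 0 < Real.sin θ := Real.sin_pos_of_pos_of_lt_pi h0 h'
      nlinarith
    · rw [h', Real.sin_pi, Real.cos_pi]
      nlinarith [Real.pi_pos]

/-- The dual activation of the ReLU. -/
noncomputable def Rhat (ρ : ℝ) : ℝ :=
  (Real.sqrt (1 - ρ ^ 2) + (π - Real.arccos ρ) * ρ) / π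

/-- For every `ρ ∈ [-1, 1]`, `ρ ≤ Rhat ρ`, with equality iff `ρ = 1`. -/
theorem stmt_2 (ρ : ℝ) (hρ : ρ ∈ Set.Icc (-1 : ℝ) 1) :
    ρ ≤ Rhat ρ ∧ (Rhat ρ = ρ ↔ ρ = 1) := by
  obtain ⟨h1, h2⟩ := hρ
  have hπ := Real.pi_pos
  rcases eq_or_lt_of_le h2 with h | h
  · subst h
    have : Rhat 1 = 1 := by
      simp [Rhat, Real.arccos_one]
    refine ⟨le_of_eq this.symm, by simp [this]⟩
  · have hθ0 : 0 < Real.arccos ρ := Real.arccos_pos.mpr h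
    have hθπ : Real.arccos ρ ≤ π := Real.arccos_le_pi ρ
    have hkey := key_sin hθ0 hθπ
    rw [Real.cos_arccos h1 h2, Real.sin_arccos] at hkey
    have hlt : ρ < Rhat ρ := by
      rw [Rhat, lt_div_iff₀ hπ]
      nlinarith
    exact ⟨hlt.le, by constructor <;> intro hh <;> [linarith; linarith]⟩
end

section
/- The function $\widehat{R}(\rho) := \frac{\sqrt{1-\rho^2} + (\pi - \cos^{-1}(\rho))\rho}{\pi}$ is convex on $[-1, 1]$, and satisfies $\widehat{R}(1) = 1$ and $\widehat{R}(-1) = 0$. -/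
open Real

lemma Rhat_hasDerivAt {x : ℝ} (h1 : -1 < x) (h2 : x < 1) :
    HasDerivAt Rhat ((π - Real.arccos x) / π) x := by
  have hx2 : (0 : ℝ) < 1 - x ^ 2 := by nlinarith
  have hs : Real.sqrt (1 - x ^ 2) ≠ 0 := ne_of_gt (Real.sqrt_pos.mpr hx2)
  have hsq : HasDerivAt (fun ρ : ℝ => Real.sqrt (1 - ρ ^ 2))
      (-x / Real.sqrt (1 - x ^ 2)) x := by
    have hp : HasDerivAt (fun ρ : ℝ => 1 - ρ ^ 2) (-(2 * x)) x := by
      simpa using (hasDerivAt_pow 2 x).const_sub 1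
    have := (Real.hasDerivAt_sqrt (ne_of_gt hx2)).comp x hp
    refine this.congr_deriv ?_
    field_simp
  have harc : HasDerivAt Real.arccos (-(1 / Real.sqrt (1 - x ^ 2))) x :=
    Real.hasDerivAt_arccos (ne_of_gt h1) (ne_of_lt h2)
  have hmul : HasDerivAt (fun ρ : ℝ => (π - Real.arccos ρ) * ρ)
      ((0 - -(1 / Real.sqrt (1 - x ^ 2))) * x + (π - Real.arccos x) * 1) x :=
    ((hasDerivAt_const x π).sub harc).mul (hasDerivAt_id x)
  have hsum := (hsq.add hmul).div_const π
  refine hsum.congr_deriv ?_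
  field_simp
  ring

/-- `Rhat` is convex on `[-1, 1]`, with `Rhat 1 = 1` and `Rhat (-1) = 0`. -/
theorem stmt_3 :
    ConvexOn ℝ (Set.Icc (-1 : ℝ) 1) Rhat ∧ Rhat 1 = 1 ∧ Rhat (-1) = 0 := by
  have hπ : (0 : ℝ) < π := Real.pi_pos
  refine ⟨?_, ?_, ?_⟩
  · have hcont : ContinuousOn Rhat (Set.Icc (-1 : ℝ) 1) := by
      apply Continuous.continuousOn
      unfold Rhat
      exact (((continuous_const.sub (continuous_pow 2)).sqrt.add
        ((continuous_const.sub Real.continuous_arccos).mul continuous_id)).div_const π)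
    have hint : interior (Set.Icc (-1 : ℝ) 1) = Set.Ioo (-1 : ℝ) 1 := interior_Icc
    refine MonotoneOn.convexOn_of_deriv (convex_Icc _ _) hcont ?_ ?_
    · rw [hint]
      intro x hx
      exact ((Rhat_hasDerivAt hx.1 hx.2).differentiableAt).differentiableWithinAt
    · rw [hint]
      intro x hx y hy hxy
      rw [(Rhat_hasDerivAt hx.1 hx.2).deriv, (Rhat_hasDerivAt hy.1 hy.2).deriv]
      have : Real.arccos y ≤ Real.arccos x := by
        unfold Real.arccos
        have := Real.monotone_arcsin hxy
        linarith
      gcongr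
  · simp [Rhat, Real.arccos_one]
  · simp [Rhat, Real.arccos_neg_one]
end

section
/- For every $\rho \in [-1, 1]$, the ReLU dual activation satisfies $\widehat{R}(\rho) := \frac{\sqrt{1-\rho^2} + (\pi - \cos^{-1}(\rho))\rho}{\pi} \leq \frac{1+\rho}{2}$. -/
open Real

noncomputable def gAux (θ : ℝ) : ℝ := π - π * Real.cos θ - 2 * Real.sin θ + 2 * θ * Real.cos θ

lemma gAux_hasDeriv (θ : ℝ) : HasDerivAt gAux ((π - 2 * θ) * Real.sin θ) θ := by
  have h1 : HasDerivAt (fun x : ℝ => π - π * Real.cos x - 2 * Real.sin x + 2 * x * Real.cos x)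
      (-(π * (-Real.sin θ)) - 2 * Real.cos θ + (2 * Real.cos θ + 2 * θ * (-Real.sin θ))) θ := by
    have hc := Real.hasDerivAt_cos θ
    have hs := Real.hasDerivAt_sin θ
    have h2 : HasDerivAt (fun x : ℝ => 2 * x * Real.cos x)
        (2 * Real.cos θ + 2 * θ * (-Real.sin θ)) θ := by
      have := ((hasDerivAt_id θ).const_mul 2).mul hc
      exact this.congr_deriv (by simp)
    exact ((((hc.const_mul π).const_sub π).sub (hs.const_mul 2))).add h2
  convert h1 using 1
  · rfl
  ring

lemma gAux_nonneg {θ : ℝ} (h0 : 0 ≤ θ) (h1 : θ ≤ π) : 0 ≤ gAux θ := by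
  have hcont : Continuous gAux := by
    unfold gAux; continuity
  rcases le_or_gt θ (π / 2) with hle | hgt
  · have hmono : MonotoneOn gAux (Set.Icc 0 (π / 2)) := by
      apply monotoneOn_of_deriv_nonneg (convex_Icc _ _) hcont.continuousOn
      · intro x hx
        exact (gAux_hasDeriv x).differentiableAt.differentiableWithinAt
      · intro x hx
        rw [interior_Icc] at hx
        rw [(gAux_hasDeriv x).deriv]
        have hs : 0 ≤ Real.sin x := Real.sin_nonneg_of_nonneg_of_le_pi hx.1.le
          (hx.2.le.trans (by linarith [Real.pi_pos]))
        have : 0 ≤ π - 2 * x := by linarith [hx.2]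
        positivity
    have h0' : gAux 0 = 0 := by simp [gAux]
    have := hmono (Set.mem_Icc.mpr ⟨le_refl 0, by positivity⟩)
      (Set.mem_Icc.mpr ⟨h0, hle⟩) h0
    linarith
  · have hanti : AntitoneOn gAux (Set.Icc (π / 2) π) := by
      apply antitoneOn_of_deriv_nonpos (convex_Icc _ _) hcont.continuousOn
      · intro x hx
        exact (gAux_hasDeriv x).differentiableAt.differentiableWithinAt
      · intro x hx
        rw [interior_Icc] at hx
        rw [(gAux_hasDeriv x).deriv]
        have hs : 0 ≤ Real.sin x := Real.sin_nonneg_of_nonneg_of_le_pi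
          (le_trans (by positivity) hx.1.le) hx.2.le
        have : π - 2 * x ≤ 0 := by linarith [hx.1]
        exact mul_nonpos_of_nonpos_of_nonneg this hs
    have hπ : gAux π = 0 := by simp [gAux]; ring
    have := hanti (Set.mem_Icc.mpr ⟨hgt.le, h1⟩)
      (Set.mem_Icc.mpr ⟨by linarith [Real.pi_pos], le_refl π⟩) h1
    linarith

/-- For every `ρ ∈ [-1, 1]`, `Rhat ρ ≤ (1 + ρ) / 2`. -/
theorem stmt_4 (ρ : ℝ) (hρ : ρ ∈ Set.Icc (-1 : ℝ) 1) :
    Rhat ρ ≤ (1 + ρ) / 2 := by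
  obtain ⟨h1, h2⟩ := hρ
  set θ := Real.arccos ρ with hθ
  have hcos : Real.cos θ = ρ := Real.cos_arccos h1 h2
  have hsin : Real.sin θ = Real.sqrt (1 - ρ ^ 2) := by
    rw [hθ, Real.sin_arccos]
  have hθ0 : 0 ≤ θ := Real.arccos_nonneg ρ
  have hθπ : θ ≤ π := Real.arccos_le_pi ρ
  have hg := gAux_nonneg hθ0 hθπ
  unfold gAux at hg
  rw [hcos] at hg
  have hπ : (0:ℝ) < π := Real.pi_pos
  rw [Rhat, ← hsin, div_le_div_iff₀ hπ (by norm_num : (0:ℝ) < 2)]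
  nlinarith [hg]
end

section
/- Let $x, y \in \mathbb{R}^{n\times n\times d}$ and let $F \in \mathbb{R}^{r\times r\times d}$ ($r \leq n$) have i.i.d. zero-mean Gaussian entries with variance $\nu^2 = 1/r^2$. Then for the cyclic convolution, $\mathbb{E}[\langle F * x, F * y \rangle] = \langle x, y \rangle$. -/
open MeasureTheory ProbabilityTheory

/-- Cyclic convolution of a filter `F : ℝ^{r×r×d}` with an input
`x : ℝ^{n×n×d}` (index arithmetic modulo `n`). -/
def cconv {n r d : ℕ} [NeZero n] (F : Fin r → Fin r → Fin d → ℝ)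
    (x : ZMod n → ZMod n → Fin d → ℝ) : ZMod n → ZMod n → ℝ :=
  fun u v => ∑ i : Fin r, ∑ j : Fin r, ∑ k : Fin d,
    F i j k * x (u - ((i : ℕ) : ZMod n)) (v - ((j : ℕ) : ZMod n)) k

open Real Set Filter
open scoped NNReal ENNReal

section AuxLemmas


lemma aux_tendsto_mul_exp {b : ℝ} (hb : 0 < b) :
    Tendsto (fun x : ℝ => x * rexp (-b * x ^ 2)) atTop (nhds 0) := by
  have h := rpow_mul_exp_neg_mul_sq_isLittleO_exp_neg hb 1
  have h2 : (fun x : ℝ => x ^ (1:ℝ) * rexp (-b * x ^ 2)) =ᶠ[atTop]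
      (fun x : ℝ => x * rexp (-b * x ^ 2)) := by
    filter_upwards [eventually_gt_atTop (0:ℝ)] with x hx
    rw [Real.rpow_one]
  have h3 : Tendsto (fun x : ℝ => rexp (-(1/2) * x)) atTop (nhds 0) := by
    have h4 : Tendsto (fun x : ℝ => -(1/2) * x) atTop atBot :=
      tendsto_id.const_mul_atTop_of_neg (by norm_num)
    exact Real.tendsto_exp_atBot.comp h4
  exact ((h.congr' h2 EventuallyEq.rfl).isBigO).trans_tendsto h3

lemma aux_integrable_sq_exp {b : ℝ} (hb : 0 < b) :
    Integrable (fun x : ℝ => x ^ 2 * rexp (-b * x ^ 2)) := by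
  have h := integrable_rpow_mul_exp_neg_mul_sq hb (by norm_num : (-1:ℝ) < 2)
  simp_rw [show ((2:ℝ)) = ((2:ℕ):ℝ) by norm_num, Real.rpow_natCast] at h
  exact h

lemma aux_integral_sq_exp {b : ℝ} (hb : 0 < b) :
    ∫ x : ℝ, x ^ 2 * rexp (-b * x ^ 2) = (2*b)⁻¹ * Real.sqrt (π / b) := by
  have hint := aux_integrable_sq_exp hb
  have hderiv : ∀ x : ℝ, HasDerivAt (fun y : ℝ => -(2*b)⁻¹ * (y * rexp (-b * y ^ 2)))
      (x ^ 2 * rexp (-b * x ^ 2) - (2*b)⁻¹ * rexp (-b * x ^ 2)) x := by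
    intro x
    have h1 : HasDerivAt (fun y : ℝ => -b * y ^ 2) (-b * (2 * x)) x := by
      simpa using ((hasDerivAt_pow 2 x).const_mul (-b))
    have h2 := h1.exp
    have h3 : HasDerivAt (fun y : ℝ => y * rexp (-b * y ^ 2))
        (1 * rexp (-b * x ^ 2) + x * (rexp (-b * x ^ 2) * (-b * (2 * x)))) x :=
      (hasDerivAt_id x).mul h2
    have h4 := h3.const_mul (-(2*b)⁻¹)
    refine h4.congr_deriv ?_
    have hb' : b ≠ 0 := hb.ne'
    field_simp
    ring
  have hIoi : ∫ x in Ioi (0:ℝ),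
      (x ^ 2 * rexp (-b * x ^ 2) - (2*b)⁻¹ * rexp (-b * x ^ 2)) = 0 := by
    have hcont : ContinuousWithinAt (fun y : ℝ => -(2*b)⁻¹ * (y * rexp (-b * y ^ 2)))
        (Ici 0) 0 := by
      apply Continuous.continuousWithinAt
      continuity
    have hf'int : IntegrableOn
        (fun x : ℝ => x ^ 2 * rexp (-b * x ^ 2) - (2*b)⁻¹ * rexp (-b * x ^ 2)) (Ioi 0) :=
      (hint.sub ((integrable_exp_neg_mul_sq hb).const_mul _)).integrableOn
    have htend : Tendsto (fun y : ℝ => -(2*b)⁻¹ * (y * rexp (-b * y ^ 2))) atTop (nhds 0) := by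
      have := (aux_tendsto_mul_exp hb).const_mul (-(2*b)⁻¹)
      simpa using this
    have h := integral_Ioi_of_hasDerivAt_of_tendsto hcont (fun x _ => hderiv x) hf'int htend
    simpa using h
  have hsub := integral_sub (hint.integrableOn (s := Ioi (0:ℝ)))
      (((integrable_exp_neg_mul_sq hb).const_mul (2*b)⁻¹).integrableOn (s := Ioi (0:ℝ)))
  rw [hsub] at hIoi
  have hIoi' : ∫ x in Ioi (0:ℝ), x ^ 2 * rexp (-b * x ^ 2)
      = (2*b)⁻¹ * ∫ x in Ioi (0:ℝ), rexp (-b * x ^ 2) := by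
    have := sub_eq_zero.mp hIoi
    rw [this, integral_const_mul]
  have heven1 : ∫ x : ℝ, x ^ 2 * rexp (-b * x ^ 2)
      = 2 * ∫ x in Ioi (0:ℝ), x ^ 2 * rexp (-b * x ^ 2) := by
    have h := integral_comp_abs (f := fun x : ℝ => x ^ 2 * rexp (-b * x ^ 2))
    simp only [sq_abs] at h
    exact h
  have heven2 : ∫ x : ℝ, rexp (-b * x ^ 2)
      = 2 * ∫ x in Ioi (0:ℝ), rexp (-b * x ^ 2) := by
    have h := integral_comp_abs (f := fun x : ℝ => rexp (-b * x ^ 2))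
    simp only [sq_abs] at h
    exact h
  rw [heven1, hIoi']
  rw [← integral_gaussian b, heven2]
  ring


variable {v : ℝ≥0}

lemma aux_pdf_eq (hv : v ≠ 0) (x : ℝ) :
    gaussianPDFReal 0 v x = (Real.sqrt (2 * π * v))⁻¹ * rexp (-(2 * (v:ℝ))⁻¹ * x ^ 2) := by
  unfold gaussianPDFReal
  rw [sub_zero]
  congr 1
  have hv' : (0:ℝ) < v := lt_of_le_of_ne (NNReal.coe_nonneg v) (by exact_mod_cast (Ne.symm hv))
  field_simp

lemma aux_integral_gaussianReal (hv : v ≠ 0) (g : ℝ → ℝ) :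
    ∫ x, g x ∂(gaussianReal 0 v) = ∫ x, gaussianPDFReal 0 v x * g x := by
  rw [gaussianReal_of_var_ne_zero _ hv]
  have h : gaussianPDF 0 v = fun x => ((Real.toNNReal (gaussianPDFReal 0 v x) : ℝ≥0) : ℝ≥0∞) := rfl
  rw [h, integral_withDensity_eq_integral_smul ((measurable_gaussianPDFReal 0 v).real_toNNReal) g]
  congr 1
  ext x
  rw [NNReal.smul_def, smul_eq_mul, Real.coe_toNNReal _ (gaussianPDFReal_nonneg _ _ _)]

lemma aux_integrable_gaussianReal_iff (hv : v ≠ 0) (g : ℝ → ℝ) :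
    Integrable g (gaussianReal 0 v) ↔ Integrable (fun x => g x * gaussianPDFReal 0 v x) := by
  rw [gaussianReal_of_var_ne_zero _ hv,
    integrable_withDensity_iff (measurable_gaussianPDF 0 v)
      (ae_of_all _ fun x => ENNReal.ofReal_lt_top)]
  unfold gaussianPDF
  simp_rw [ENNReal.toReal_ofReal (gaussianPDFReal_nonneg _ _ _)]

lemma aux_integrable_sq_gaussianReal (hv : v ≠ 0) :
    Integrable (fun x : ℝ => x ^ 2) (gaussianReal 0 v) := by
  have hv' : (0:ℝ) < v := lt_of_le_of_ne (NNReal.coe_nonneg v) (by exact_mod_cast (Ne.symm hv))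
  have hb : (0:ℝ) < (2 * (v:ℝ))⁻¹ := by positivity
  rw [aux_integrable_gaussianReal_iff hv]
  have heq : (fun x : ℝ => x ^ 2 * gaussianPDFReal 0 v x)
      = fun x => (Real.sqrt (2 * π * v))⁻¹ * (x ^ 2 * rexp (-(2 * (v:ℝ))⁻¹ * x ^ 2)) :=
    funext fun x => by rw [aux_pdf_eq hv]; ring
  rw [heq]
  exact (aux_integrable_sq_exp hb).const_mul _

lemma aux_integral_sq_gaussianReal (hv : v ≠ 0) :
    ∫ x, x ^ 2 ∂(gaussianReal 0 v) = (v : ℝ) := by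
  have hv' : (0:ℝ) < v := lt_of_le_of_ne (NNReal.coe_nonneg v) (by exact_mod_cast (Ne.symm hv))
  have hb : (0:ℝ) < (2 * (v:ℝ))⁻¹ := by positivity
  rw [aux_integral_gaussianReal hv]
  have heq : (fun x : ℝ => gaussianPDFReal 0 v x * x ^ 2)
      = fun x => (Real.sqrt (2 * π * v))⁻¹ * (x ^ 2 * rexp (-(2 * (v:ℝ))⁻¹ * x ^ 2)) :=
    funext fun x => by rw [aux_pdf_eq hv]; ring
  rw [heq, integral_const_mul, aux_integral_sq_exp hb]
  rw [show (2 * (2 * (v:ℝ))⁻¹)⁻¹ = (v:ℝ) by field_simp]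
  rw [show π / (2 * (v:ℝ))⁻¹ = 2 * π * (v:ℝ) by field_simp]
  rw [inv_mul_eq_div, mul_div_assoc, div_self (by positivity : Real.sqrt (2 * π * (v:ℝ)) ≠ 0),
    mul_one]

lemma aux_integrable_id_gaussianReal (hv : v ≠ 0) :
    Integrable (fun x : ℝ => x) (gaussianReal 0 v) := by
  have hv' : (0:ℝ) < v := lt_of_le_of_ne (NNReal.coe_nonneg v) (by exact_mod_cast (Ne.symm hv))
  have hb : (0:ℝ) < (2 * (v:ℝ))⁻¹ := by positivity
  rw [aux_integrable_gaussianReal_iff hv]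
  have heq : (fun x : ℝ => x * gaussianPDFReal 0 v x)
      = fun x => (Real.sqrt (2 * π * v))⁻¹ * (x * rexp (-(2 * (v:ℝ))⁻¹ * x ^ 2)) :=
    funext fun x => by rw [aux_pdf_eq hv]; ring
  rw [heq]
  exact (integrable_mul_exp_neg_mul_sq hb).const_mul _

lemma aux_integral_id_gaussianReal (hv : v ≠ 0) :
    ∫ x, x ∂(gaussianReal 0 v) = 0 := by
  have hv' : (0:ℝ) < v := lt_of_le_of_ne (NNReal.coe_nonneg v) (by exact_mod_cast (Ne.symm hv))
  have hb : (0:ℝ) < (2 * (v:ℝ))⁻¹ := by positivity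
  rw [aux_integral_gaussianReal hv]
  have heq : (fun x : ℝ => gaussianPDFReal 0 v x * x)
      = fun x => (Real.sqrt (2 * π * v))⁻¹ * (x * rexp (-(2 * (v:ℝ))⁻¹ * x ^ 2)) :=
    funext fun x => by rw [aux_pdf_eq hv]; ring
  rw [heq, integral_const_mul]
  have hodd : ∫ x : ℝ, x * rexp (-((2 * (v:ℝ))⁻¹ * x ^ 2)) = 0 := by
    have h := integral_neg_eq_self (fun x : ℝ => x * rexp (-((2 * (v:ℝ))⁻¹ * x ^ 2)))
      (volume : Measure ℝ)
    simp only [neg_sq, neg_mul] at h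
    rw [integral_neg] at h
    linarith
  simp_rw [neg_mul]
  rw [hodd, mul_zero]

lemma aux_sum_mul_sum {α β : Type*} [Fintype α] [Fintype β] (f : α → ℝ) (g : β → ℝ) :
    (∑ a : α, f a) * (∑ b : β, g b) = ∑ ab : α × β, f ab.1 * g ab.2 := by
  rw [Fintype.sum_prod_type, Finset.sum_mul_sum]

end AuxLemmas

/-- Johnson–Lindenstrauss in expectation for random linear convolutions: if the
entries of the filter `F` are i.i.d. centered Gaussians with variance `1/r²`,
then `𝔼[⟨F * x, F * y⟩] = ⟨x, y⟩`. -/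
theorem stmt_6 {Ω : Type*} [MeasureSpace Ω] [IsProbabilityMeasure (ℙ : Measure Ω)]
    {n r d : ℕ} [NeZero n] (hr : 0 < r) (hrn : r ≤ n)
    (x y : ZMod n → ZMod n → Fin d → ℝ)
    (F : Ω → Fin r → Fin r → Fin d → ℝ)
    (hmeas : ∀ i j k, Measurable fun ω => F ω i j k)
    (hGauss : ∀ i j k, Measure.map (fun ω => F ω i j k) ℙ =
      gaussianReal 0 ((1 : ℝ) / r ^ 2).toNNReal)
    (hindep : iIndepFun
      (fun p : Fin r × Fin r × Fin d => fun ω => F ω p.1 p.2.1 p.2.2) ℙ) :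
    ∫ ω, ∑ u : ZMod n, ∑ v : ZMod n, cconv (F ω) x u v * cconv (F ω) y u v =
      ∑ u : ZMod n, ∑ v : ZMod n, ∑ k : Fin d, x u v k * y u v k := by
  classical
  set v : ℝ≥0 := ((1 : ℝ) / r ^ 2).toNNReal with hvdef
  have hrR : (0:ℝ) < (r:ℝ) := by exact_mod_cast hr
  have hv : v ≠ 0 := by
    simp only [hvdef, ne_eq, Real.toNNReal_eq_zero, not_le]
    positivity
  have hvR : (v : ℝ) = 1 / (r:ℝ) ^ 2 := Real.coe_toNNReal _ (by positivity)
  set P := Fin r × Fin r × Fin d with hPdef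
  set f : P → Ω → ℝ := fun p ω => F ω p.1 p.2.1 p.2.2 with hfdef
  have hm : ∀ p : P, Measurable (f p) := fun p => hmeas _ _ _
  have hmap : ∀ p : P, Measure.map (f p) ℙ = gaussianReal 0 v := fun p => hGauss _ _ _
  -- L2 membership
  have hL2 : ∀ p : P, MemLp (f p) 2 ℙ := by
    intro p
    have hid : MemLp (id : ℝ → ℝ) 2 (gaussianReal 0 v) := by
      rw [memLp_two_iff_integrable_sq aestronglyMeasurable_id]
      simpa using aux_integrable_sq_gaussianReal hv
    rw [← hmap p, memLp_map_measure_iff aestronglyMeasurable_id (hm p).aemeasurable] at hid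
    exact hid
  have hInt1 : ∀ p : P, Integrable (f p) ℙ := fun p => (hL2 p).integrable one_le_two
  have hE1 : ∀ p : P, ∫ ω, f p ω ∂ℙ = 0 := by
    intro p
    have h := integral_map (hm p).aemeasurable (aestronglyMeasurable_id (μ := Measure.map (f p) ℙ))
    simp only [id] at h
    rw [← h, hmap p, aux_integral_id_gaussianReal hv]
  have hE2 : ∀ p : P, ∫ ω, f p ω ^ 2 ∂ℙ = (v : ℝ) := by
    intro p
    have h := integral_map (μ := ℙ) (f := fun x : ℝ => x ^ 2) (hm p).aemeasurable
      ((measurable_id.pow_const 2).aestronglyMeasurable)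
    rw [← h, hmap p, aux_integral_sq_gaussianReal hv]
  have hIntMul : ∀ p q : P, Integrable (fun ω => f p ω * f q ω) ℙ := by
    intro p q
    have h := (hL2 q).smul (φ := f p) (hL2 p)
      (hpqr := ⟨ENNReal.inv_two_add_inv_two.trans inv_one.symm⟩)
    rw [memLp_one_iff_integrable] at h
    exact h.congr (Eventually.of_forall fun ω => by simp [smul_eq_mul])
  have hcov : ∀ p q : P, ∫ ω, f p ω * f q ω ∂ℙ = if p = q then (v:ℝ) else 0 := by
    intro p q
    by_cases hpq : p = q
    · subst hpq
      rw [if_pos rfl, ← hE2 p]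
      congr 1
      funext ω
      ring
    · rw [if_neg hpq]
      have hind : IndepFun (f p) (f q) ℙ := hindep.indepFun hpq
      have h := hind.integral_mul_eq_mul_integral (hInt1 p).aestronglyMeasurable (hInt1 q).aestronglyMeasurable
      refine h.trans ?_
      show (∫ ω, f p ω) * (∫ ω, f q ω) = 0
      rw [hE1 p, hE1 q, mul_zero]
  -- rewrite the integrand
  set c : (ZMod n × ZMod n) × P × P → ℝ := fun t =>
    x (t.1.1 - ((t.2.1.1 : ℕ) : ZMod n)) (t.1.2 - ((t.2.1.2.1 : ℕ) : ZMod n)) t.2.1.2.2 *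
    y (t.1.1 - ((t.2.2.1 : ℕ) : ZMod n)) (t.1.2 - ((t.2.2.2.1 : ℕ) : ZMod n)) t.2.2.2.2
    with hcdef
  have hc : ∀ (G : Fin r → Fin r → Fin d → ℝ) (z : ZMod n → ZMod n → Fin d → ℝ)
      (u w : ZMod n), cconv G z u w = ∑ p : P,
        G p.1 p.2.1 p.2.2 * z (u - ((p.1 : ℕ) : ZMod n)) (w - ((p.2.1 : ℕ) : ZMod n)) p.2.2 := by
    intro G z u w
    rw [cconv]
    rw [Fintype.sum_prod_type]
    exact Finset.sum_congr rfl fun i _ => by rw [Fintype.sum_prod_type]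
  have hpoint : ∀ ω : Ω,
      (∑ u : ZMod n, ∑ w : ZMod n, cconv (F ω) x u w * cconv (F ω) y u w)
      = ∑ t : (ZMod n × ZMod n) × P × P, c t * (f t.2.1 ω * f t.2.2 ω) := by
    intro ω
    rw [Fintype.sum_prod_type (f := fun t : (ZMod n × ZMod n) × P × P =>
      c t * (f t.2.1 ω * f t.2.2 ω)), ← Fintype.sum_prod_type
      (f := fun uw : ZMod n × ZMod n => cconv (F ω) x uw.1 uw.2 * cconv (F ω) y uw.1 uw.2)]
    refine Finset.sum_congr rfl fun uw _ => ?_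
    rw [hc, hc, aux_sum_mul_sum]
    rw [Fintype.sum_prod_type (f := fun pq : P × P => c (uw, pq) * (f pq.1 ω * f pq.2 ω)),
      Fintype.sum_prod_type]
    refine Finset.sum_congr rfl fun p _ => Finset.sum_congr rfl fun q _ => ?_
    simp only [hcdef, hfdef]
    ring
  rw [integral_congr_ae (Eventually.of_forall hpoint)]
  rw [integral_finset_sum _ (fun t _ => ((hIntMul t.2.1 t.2.2).const_mul (c t)))]
  have hstep : ∀ t : (ZMod n × ZMod n) × P × P,
      ∫ ω, c t * (f t.2.1 ω * f t.2.2 ω) ∂ℙ = c t * (if t.2.1 = t.2.2 then (v:ℝ) else 0) := by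
    intro t
    rw [integral_const_mul, hcov]
  rw [Finset.sum_congr rfl fun t _ => hstep t]
  -- now pure algebra
  rw [Fintype.sum_prod_type]
  have hinner : ∀ uw : ZMod n × ZMod n,
      (∑ pq : P × P, c (uw, pq) * (if pq.1 = pq.2 then (v:ℝ) else 0))
      = ∑ p : P, c (uw, (p, p)) * (v:ℝ) := by
    intro uw
    rw [Fintype.sum_prod_type]
    refine Finset.sum_congr rfl fun p _ => ?_
    simp only [mul_ite, mul_zero]
    rw [Finset.sum_ite_eq (Finset.univ) p (fun q => c (uw, (p, q)) * (v:ℝ))]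
    simp
  rw [Finset.sum_congr rfl fun uw _ => hinner uw]
  rw [Finset.sum_comm]
  have hshift : ∀ p : P, (∑ uw : ZMod n × ZMod n, c (uw, (p, p)) * (v:ℝ))
      = (v:ℝ) * ∑ u : ZMod n, ∑ w : ZMod n, x u w p.2.2 * y u w p.2.2 := by
    intro p
    rw [← Fintype.sum_prod_type (f := fun uw : ZMod n × ZMod n =>
      x uw.1 uw.2 p.2.2 * y uw.1 uw.2 p.2.2), Finset.mul_sum]
    exact Fintype.sum_equiv
      ((Equiv.subRight ((p.1 : ℕ) : ZMod n)).prodCongr (Equiv.subRight ((p.2.1 : ℕ) : ZMod n)))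
      _ _ (fun uw => by simp [hcdef, Equiv.subRight, mul_comm])
  rw [Finset.sum_congr rfl fun p _ => hshift p]
  -- sum over P of something depending only on k
  rw [Fintype.sum_prod_type]
  simp only [Fintype.sum_prod_type]
  simp only [Finset.sum_const, Finset.card_univ, Fintype.card_fin, smul_smul, nsmul_eq_mul,
    ← Finset.mul_sum]
  have hswap : (∑ k : Fin d, ∑ u : ZMod n, ∑ w : ZMod n, x u w k * y u w k)
      = ∑ u : ZMod n, ∑ w : ZMod n, ∑ k : Fin d, x u w k * y u w k := by
    rw [Finset.sum_comm]
    exact Finset.sum_congr rfl fun u _ => Finset.sum_comm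
  rw [hvR, hswap]
  have hrne : (r:ℝ) ≠ 0 := ne_of_gt hrR
  push_cast
  field_simp
end

section
/- Let $x \in \mathbb{R}^{n\times n\times d}$ and let $F \in \mathbb{R}^{r\times r\times d}$ ($r \leq n$) have i.i.d. zero-mean Gaussian entries with variance $\nu^2$. For a homogeneous activation $\sigma$ (i.e., $\sigma(cx) = c\sigma(x)$ for $c \geq 0$), $\mathbb{E}[\|\sigma(F*x)\|^2] = \nu^2 \nu_\sigma^2 r^2 \|x\|^2$, where $\nu_\sigma^2 = \mathbb{E}[\sigma(Z)^2]$ for a standard Gaussian $Z$. -/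
open MeasureTheory ProbabilityTheory

section Aux
open scoped NNReal ENNReal

lemma aux_gauss_neg (v : ℝ≥0) :
    (gaussianReal 0 v).map (fun y : ℝ => -y) = gaussianReal 0 v := by
  have h := gaussianReal_map_const_mul (μ := 0) (v := v) (-1)
  simp only [neg_one_mul] at h
  rw [h]
  congr 1
  · simp
  · ext
    push_cast
    norm_num

lemma aux_gauss_scale (t : ℝ) :
    (gaussianReal 0 1).map (fun y : ℝ => t * y) = gaussianReal 0 (t ^ 2).toNNReal := by
  have h := gaussianReal_map_const_mul (μ := 0) (v := 1) t
  rw [show (fun y : ℝ => t * y) = (t * ·) from rfl, h]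
  congr 1
  · simp
  · ext
    simp [Real.coe_toNNReal _ (sq_nonneg t)]

lemma aux_sq_integrable (v : ℝ≥0) :
    Integrable (fun y : ℝ => y ^ 2) (gaussianReal 0 v) := by
  by_cases hv : v = 0
  · rw [hv, gaussianReal_zero_var]
    have h : (fun y : ℝ => y ^ 2) =ᵐ[Measure.dirac (0:ℝ)] fun _ => (0:ℝ) ^ 2 :=
      ae_eq_dirac' (by measurability)
    exact (integrable_const _).congr h.symm
  · rw [gaussianReal_of_var_ne_zero _ hv]
    rw [integrable_withDensity_iff (measurable_gaussianPDF _ _)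
      (Filter.Eventually.of_forall fun _ => ENNReal.ofReal_lt_top)]
    have hb : (0:ℝ) < (2 * (v:ℝ))⁻¹ := by positivity
    have h1 : Integrable (fun y : ℝ => y ^ (2:ℝ) * Real.exp (-(2 * (v:ℝ))⁻¹ * y ^ 2)) :=
      integrable_rpow_mul_exp_neg_mul_sq hb (by norm_num)
    have h2 := h1.const_mul (Real.sqrt (2 * Real.pi * v))⁻¹
    apply h2.congr
    filter_upwards with y
    rw [gaussianPDF, ENNReal.toReal_ofReal (gaussianPDFReal_nonneg _ _ _),
      gaussianPDFReal]
    rw [Real.rpow_two]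
    ring_nf

lemma aux_memLp_id (v : ℝ≥0) : MemLp (id : ℝ → ℝ) 2 (gaussianReal 0 v) :=
  (memLp_two_iff_integrable_sq aestronglyMeasurable_id).2 (aux_sq_integrable v)

lemma aux_integral_id_symm (μ : Measure ℝ) (hsym : μ.map (fun y : ℝ => -y) = μ) :
    ∫ y, y ∂μ = 0 := by
  have h2 : ∫ y, y ∂(μ.map (fun y : ℝ => -y)) = ∫ y, -y ∂μ :=
    integral_map (φ := fun y : ℝ => -y) (f := fun y : ℝ => y)
      measurable_neg.aemeasurable measurable_id.aestronglyMeasurable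
  rw [hsym, integral_neg] at h2
  linarith

lemma aux_sym_integral (σ : ℝ → ℝ) (hσmeas : Measurable σ)
    (hhom : ∀ c : ℝ, 0 ≤ c → ∀ t : ℝ, σ (c * t) = c * σ t)
    (μ : Measure ℝ) [IsProbabilityMeasure μ]
    (hsym : μ.map (fun y : ℝ => -y) = μ)
    (hint : Integrable (fun y : ℝ => y ^ 2) μ) :
    ∫ y, σ y ^ 2 ∂μ = ((σ 1 ^ 2 + σ (-1) ^ 2) / 2) * ∫ y, y ^ 2 ∂μ := by
  have hid : ∀ y : ℝ, σ y ^ 2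
      = σ 1 ^ 2 * max y 0 ^ 2 + σ (-1) ^ 2 * max (-y) 0 ^ 2 := by
    intro y
    rcases le_total 0 y with hy | hy
    · have h1 : σ y = y * σ 1 := by simpa using hhom y hy 1
      rw [h1, max_eq_left hy, max_eq_right (by linarith)]
      ring
    · have h1 : σ y = -y * σ (-1) := by
        have := hhom (-y) (by linarith) (-1)
        simpa using this
      rw [h1, max_eq_right hy, max_eq_left (by linarith)]
      ring
  have hmp : Measurable fun y : ℝ => max y 0 ^ 2 :=
    (measurable_id.max measurable_const).pow_const 2
  have hmn : Measurable fun y : ℝ => max (-y) 0 ^ 2 :=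
    (measurable_neg.max measurable_const).pow_const 2
  have hip : Integrable (fun y : ℝ => max y 0 ^ 2) μ := by
    refine hint.mono hmp.aestronglyMeasurable ?_
    filter_upwards with y
    simp only [Real.norm_eq_abs, abs_pow]
    have h0 : |max y 0| ≤ |y| := by
      rw [abs_of_nonneg (le_max_right y 0)]
      exact max_le (le_abs_self y) (abs_nonneg y)
    exact pow_le_pow_left₀ (abs_nonneg _) h0 2
  have hin : Integrable (fun y : ℝ => max (-y) 0 ^ 2) μ := by
    refine hint.mono hmn.aestronglyMeasurable ?_
    filter_upwards with y
    simp only [Real.norm_eq_abs, abs_pow]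
    have h0 : |max (-y) 0| ≤ |y| := by
      rw [abs_of_nonneg (le_max_right _ 0)]
      exact max_le (neg_le_abs y) (abs_nonneg y)
    exact pow_le_pow_left₀ (abs_nonneg _) h0 2
  have hswap : ∫ y, max (-y) 0 ^ 2 ∂μ = ∫ y, max y 0 ^ 2 ∂μ := by
    have h2 : ∫ y, max y 0 ^ 2 ∂(μ.map (fun y : ℝ => -y))
        = ∫ y, max (-y) 0 ^ 2 ∂μ :=
      integral_map measurable_neg.aemeasurable hmp.aestronglyMeasurable
    rw [hsym] at h2
    exact h2.symm
  have hsplit : (∫ y, max y 0 ^ 2 ∂μ) + (∫ y, max (-y) 0 ^ 2 ∂μ) = ∫ y, y ^ 2 ∂μ := by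
    rw [← integral_add hip hin]
    congr 1
    funext y
    rcases le_total 0 y with hy | hy
    · rw [max_eq_left hy, max_eq_right (by linarith)]
      ring
    · rw [max_eq_right hy, max_eq_left (by linarith)]
      ring
  have hP : ∫ y, max y 0 ^ 2 ∂μ = (∫ y, y ^ 2 ∂μ) / 2 := by
    rw [hswap] at hsplit
    linarith
  calc ∫ y, σ y ^ 2 ∂μ
      = ∫ y, (σ 1 ^ 2 * max y 0 ^ 2 + σ (-1) ^ 2 * max (-y) 0 ^ 2) ∂μ := by
        congr 1; funext y; exact hid y
    _ = σ 1 ^ 2 * ∫ y, max y 0 ^ 2 ∂μ + σ (-1) ^ 2 * ∫ y, max (-y) 0 ^ 2 ∂μ := by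
        rw [integral_add (hip.const_mul _) (hin.const_mul _), integral_const_mul,
          integral_const_mul]
    _ = ((σ 1 ^ 2 + σ (-1) ^ 2) / 2) * ∫ y, y ^ 2 ∂μ := by
        rw [hswap, hP]; ring

lemma aux_symm_sum {Ω : Type*} [MeasureSpace Ω] [IsProbabilityMeasure (ℙ : Measure Ω)]
    {ι : Type*} (X : ι → Ω → ℝ) (hmeas : ∀ i, Measurable (X i))
    (hindep : iIndepFun X ℙ)
    (hsymm : ∀ i, (Measure.map (X i) ℙ).map (fun y : ℝ => -y) = Measure.map (X i) ℙ)
    (s : Finset ι) :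
    (Measure.map (fun ω => ∑ i ∈ s, X i ω) ℙ).map (fun y : ℝ => -y)
      = Measure.map (fun ω => ∑ i ∈ s, X i ω) ℙ := by
  classical
  induction s using Finset.induction_on with
  | empty =>
      simp only [Finset.sum_empty]
      rw [Measure.map_const, measure_univ, one_smul, Measure.map_dirac' measurable_neg,
        neg_zero]
  | @insert i s hi ih =>
      simp only [Finset.sum_insert hi]
      set S : Ω → ℝ := fun ω => ∑ j ∈ s, X j ω with hS
      have hSmeas : Measurable S := Finset.measurable_sum _ fun j _ => hmeas j
      have hInd : IndepFun (X i) S ℙ := by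
        have h := (hindep.indepFun_finset_sum_of_notMem hmeas hi).symm
        have he : (∑ j ∈ s, X j) = S := by
          funext ω; simp [hS]
        rwa [he] at h
      haveI : IsProbabilityMeasure (Measure.map (X i) ℙ) :=
        Measure.isProbabilityMeasure_map (hmeas i).aemeasurable
      haveI : IsProbabilityMeasure (Measure.map S ℙ) :=
        Measure.isProbabilityMeasure_map hSmeas.aemeasurable
      have hpair : Measure.map (fun ω => (X i ω, S ω)) ℙ
          = (Measure.map (X i) ℙ).prod (Measure.map S ℙ) :=
        (indepFun_iff_map_prod_eq_prod_map_map (hmeas i).aemeasurable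
          hSmeas.aemeasurable).1 hInd
      have hmapsum : Measure.map (fun ω => X i ω + S ω) ℙ
          = ((Measure.map (X i) ℙ).prod (Measure.map S ℙ)).map
              (fun p : ℝ × ℝ => p.1 + p.2) := by
        rw [← hpair, Measure.map_map measurable_add ((hmeas i).prodMk hSmeas)]
        rfl
      rw [hmapsum, Measure.map_map measurable_neg measurable_add]
      have hcomp : ((fun y : ℝ => -y) ∘ fun p : ℝ × ℝ => p.1 + p.2)
          = (fun p : ℝ × ℝ => p.1 + p.2) ∘ Prod.map (fun y : ℝ => -y) (fun y : ℝ => -y) := by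
        funext p
        simp [neg_add, add_comm]
      rw [hcomp, ← Measure.map_map measurable_add (Measurable.prodMap measurable_neg measurable_neg),
        ← Measure.map_prod_map _ _ measurable_neg measurable_neg, hsymm i, ih]

-- integrability of σ(G)^2 for L² G
lemma aux_integrable_sig {Ω : Type*} [MeasureSpace Ω] [IsProbabilityMeasure (ℙ : Measure Ω)]
    (σ : ℝ → ℝ) (hσmeas : Measurable σ)
    (hhom : ∀ c : ℝ, 0 ≤ c → ∀ t : ℝ, σ (c * t) = c * σ t)
    {G : Ω → ℝ} (hGmeas : Measurable G) (hG2 : MemLp G 2 ℙ) :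
    Integrable (fun ω => σ (G ω) ^ 2) ℙ := by
  have hb : ∀ y : ℝ, |σ y ^ 2| ≤ (σ 1 ^ 2 + σ (-1) ^ 2) * y ^ 2 := by
    intro y
    rcases le_total 0 y with hy | hy
    · have h1 : σ y = y * σ 1 := by simpa using hhom y hy 1
      rw [h1, abs_of_nonneg (sq_nonneg _)]
      nlinarith [sq_nonneg (σ (-1)), sq_nonneg y, sq_nonneg (σ 1), sq_nonneg (y * σ 1)]
    · have h1 : σ y = -y * σ (-1) := by
        have := hhom (-y) (by linarith) (-1)
        simpa using this
      rw [h1, abs_of_nonneg (sq_nonneg _)]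
      nlinarith [sq_nonneg (σ (-1)), sq_nonneg y, sq_nonneg (σ 1), sq_nonneg (y * σ (-1))]
  refine (hG2.integrable_sq.const_mul (σ 1 ^ 2 + σ (-1) ^ 2)).mono
    (((hσmeas.comp hGmeas).pow_const 2).aestronglyMeasurable) ?_
  filter_upwards with ω
  rw [Real.norm_eq_abs, Real.norm_eq_abs]
  calc |σ (G ω) ^ 2| ≤ (σ 1 ^ 2 + σ (-1) ^ 2) * G ω ^ 2 := hb _
    _ ≤ |(σ 1 ^ 2 + σ (-1) ^ 2) * G ω ^ 2| := le_abs_self _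

lemma aux_main {Ω : Type*} [MeasureSpace Ω] [IsProbabilityMeasure (ℙ : Measure Ω)]
    {ι : Type*} [Fintype ι]
    (σ : ℝ → ℝ) (hσmeas : Measurable σ)
    (hhom : ∀ c : ℝ, 0 ≤ c → ∀ t : ℝ, σ (c * t) = c * σ t)
    (ν : ℝ) (hν : 0 ≤ ν)
    (X : ι → Ω → ℝ) (hXmeas : ∀ i, Measurable (X i))
    (hXlaw : ∀ i, Measure.map (X i) ℙ = gaussianReal 0 (ν ^ 2).toNNReal)
    (hindep : iIndepFun X ℙ)
    (c : ι → ℝ) :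
    ∫ ω, σ (∑ i, c i * X i ω) ^ 2
      = ν ^ 2 * (∫ z, σ z ^ 2 ∂gaussianReal 0 1) * ∑ i, c i ^ 2 := by
  classical
  set Y : ι → Ω → ℝ := fun i ω => c i * X i ω with hYdef
  have hYmeas : ∀ i, Measurable (Y i) := fun i => (hXmeas i).const_mul (c i)
  have hYindep : iIndepFun Y ℙ := by
    have := hindep.comp (fun i (y : ℝ) => c i * y) (fun i => measurable_const_mul (c i))
    exact this
  have hYlaw : ∀ i, Measure.map (Y i) ℙ = gaussianReal 0 ((|c i| * ν) ^ 2).toNNReal := by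
    intro i
    have h : Measure.map (Y i) ℙ = (Measure.map (X i) ℙ).map (fun y : ℝ => c i * y) := by
      rw [Measure.map_map (measurable_const_mul (c i)) (hXmeas i)]
      rfl
    rw [h, hXlaw i, gaussianReal_map_const_mul]
    congr 1
    · simp
    · ext
      push_cast
      rw [Real.coe_toNNReal _ (sq_nonneg ν), Real.coe_toNNReal _ (by positivity)]
      rw [mul_pow, sq_abs]
  have hYscale : ∀ i, Measure.map (Y i) ℙ
      = (gaussianReal 0 1).map (fun y : ℝ => (|c i| * ν) * y) := by
    intro i
    rw [hYlaw i, aux_gauss_scale]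
  have hYmem : ∀ i, MemLp (Y i) 2 ℙ := by
    intro i
    have h := aux_memLp_id ((|c i| * ν) ^ 2).toNNReal
    rw [← hYlaw i] at h
    exact (memLp_map_measure_iff aestronglyMeasurable_id (hYmeas i).aemeasurable).1 h
  set G : Ω → ℝ := fun ω => ∑ i, Y i ω with hGdef
  have hGmeas : Measurable G := Finset.measurable_sum _ fun i _ => hYmeas i
  have hGfun : G = ∑ i, Y i := by
    funext ω; simp [hGdef]
  have hG2 : MemLp G 2 ℙ := by
    rw [hGfun]
    exact memLp_finset_sum' _ fun i _ => hYmem i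
  -- mean of Y i is zero
  have hEY : ∀ i, ∫ ω, Y i ω = 0 := by
    intro i
    have h : ∫ ω, Y i ω = ∫ y, y ∂(Measure.map (Y i) ℙ) :=
      (integral_map (hYmeas i).aemeasurable measurable_id.aestronglyMeasurable).symm
    rw [h, hYlaw i]
    exact aux_integral_id_symm _ (aux_gauss_neg _)
  -- second moment of G
  have m₁ : ℝ := ∫ z, z ^ 2 ∂gaussianReal 0 1
  have hVarY : ∀ i, variance (Y i) ℙ = c i ^ 2 * ν ^ 2 * ∫ z, z ^ 2 ∂gaussianReal 0 1 := by
    intro i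
    rw [variance_eq_sub (hYmem i)]
    have hE2 : ∫ ω, Y i ω ^ 2 = ∫ y, y ^ 2 ∂(Measure.map (Y i) ℙ) :=
      (integral_map (hYmeas i).aemeasurable
        (measurable_id.pow_const 2).aestronglyMeasurable).symm
    have hE2' : ∫ y, y ^ 2 ∂(Measure.map (Y i) ℙ)
        = (|c i| * ν) ^ 2 * ∫ z, z ^ 2 ∂gaussianReal 0 1 := by
      rw [hYscale i,
        integral_map (φ := fun y : ℝ => |c i| * ν * y) (f := fun y : ℝ => y ^ 2)
          (measurable_const_mul _).aemeasurable
          (measurable_id'.pow_const 2).aestronglyMeasurable]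
      simp_rw [mul_pow]
      rw [integral_const_mul]
    have hmean : ∫ ω, Y i ω = 0 := hEY i
    simp only [Pi.pow_apply]
    rw [hE2, hE2', hmean]
    rw [mul_pow, sq_abs]
    ring
  have hMomG : ∫ ω, G ω ^ 2
      = (∑ i, c i ^ 2) * ν ^ 2 * ∫ z, z ^ 2 ∂gaussianReal 0 1 := by
    have hvar : variance G ℙ = ∑ i, variance (Y i) ℙ := by
      rw [hGfun]
      exact IndepFun.variance_sum (fun i _ => hYmem i)
        (fun i _ j _ hij => hYindep.indepFun hij)
    have hEG : ∫ ω, G ω = 0 := by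
      rw [hGdef]
      rw [integral_finset_sum _ fun i _ => (hYmem i).integrable one_le_two]
      simp [hEY]
    have hdef := variance_eq_sub hG2
    simp only [Pi.pow_apply] at hdef
    rw [hEG] at hdef
    rw [hvar] at hdef
    have : ∫ ω, G ω ^ 2 = ∑ i, variance (Y i) ℙ := by linarith [hdef]
    rw [this]
    simp_rw [hVarY]
    rw [← Finset.sum_mul, ← Finset.sum_mul]
  -- law of G is symmetric
  haveI : IsProbabilityMeasure (Measure.map G ℙ) :=
    Measure.isProbabilityMeasure_map hGmeas.aemeasurable
  have hGsym : (Measure.map G ℙ).map (fun y : ℝ => -y) = Measure.map G ℙ := by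
    have := aux_symm_sum Y hYmeas hYindep
      (fun i => by rw [hYlaw i]; exact aux_gauss_neg _) Finset.univ
    exact this
  have hGint : Integrable (fun y : ℝ => y ^ 2) (Measure.map G ℙ) := by
    have h := (memLp_map_measure_iff aestronglyMeasurable_id hGmeas.aemeasurable).2 hG2
    simpa using h.integrable_sq
  have hL : ∫ ω, σ (G ω) ^ 2 = ∫ y, σ y ^ 2 ∂(Measure.map G ℙ) :=
    (integral_map hGmeas.aemeasurable
      ((hσmeas.pow_const 2).aestronglyMeasurable)).symm
  have hMomG' : ∫ y, y ^ 2 ∂(Measure.map G ℙ) = ∫ ω, G ω ^ 2 :=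
    integral_map hGmeas.aemeasurable (measurable_id.pow_const 2).aestronglyMeasurable
  have hN01 : ∫ z, σ z ^ 2 ∂gaussianReal 0 1
      = ((σ 1 ^ 2 + σ (-1) ^ 2) / 2) * ∫ z, z ^ 2 ∂gaussianReal 0 1 :=
    aux_sym_integral σ hσmeas hhom _ (aux_gauss_neg 1) (aux_sq_integrable 1)
  calc ∫ ω, σ (∑ i, c i * X i ω) ^ 2 = ∫ ω, σ (G ω) ^ 2 := rfl
    _ = ((σ 1 ^ 2 + σ (-1) ^ 2) / 2) * ∫ y, y ^ 2 ∂(Measure.map G ℙ) := by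
        rw [hL]
        exact aux_sym_integral σ hσmeas hhom _ hGsym hGint
    _ = ((σ 1 ^ 2 + σ (-1) ^ 2) / 2) *
          ((∑ i, c i ^ 2) * ν ^ 2 * ∫ z, z ^ 2 ∂gaussianReal 0 1) := by
        rw [hMomG', hMomG]
    _ = ν ^ 2 * (∫ z, σ z ^ 2 ∂gaussianReal 0 1) * ∑ i, c i ^ 2 := by
        rw [hN01]; ring

end Aux

/-- For a measurable homogeneous activation `σ` and a filter `F` with i.i.d.
centered Gaussian entries of variance `ν²`,
`𝔼[‖σ(F * x)‖²] = ν² ν_σ² r² ‖x‖²`, where `ν_σ² = 𝔼[σ(Z)²]`, `Z ∼ N(0,1)`. -/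
theorem stmt_7 {Ω : Type*} [MeasureSpace Ω] [IsProbabilityMeasure (ℙ : Measure Ω)]
    {n r d : ℕ} [NeZero n] (hr : 0 < r) (hrn : r ≤ n)
    (σ : ℝ → ℝ) (hσmeas : Measurable σ)
    (hhom : ∀ c : ℝ, 0 ≤ c → ∀ t : ℝ, σ (c * t) = c * σ t)
    (ν : ℝ) (hν : 0 ≤ ν)
    (x : ZMod n → ZMod n → Fin d → ℝ)
    (F : Ω → Fin r → Fin r → Fin d → ℝ)
    (hmeas : ∀ i j k, Measurable fun ω => F ω i j k)
    (hGauss : ∀ i j k, Measure.map (fun ω => F ω i j k) ℙ =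
      gaussianReal 0 (ν ^ 2).toNNReal)
    (hindep : iIndepFun
      (fun p : Fin r × Fin r × Fin d => fun ω => F ω p.1 p.2.1 p.2.2) ℙ) :
    ∫ ω, ∑ u : ZMod n, ∑ v : ZMod n, (σ (cconv (F ω) x u v)) ^ 2 =
      ν ^ 2 * (∫ z, (σ z) ^ 2 ∂gaussianReal 0 1) * r ^ 2 *
        ∑ u : ZMod n, ∑ v : ZMod n, ∑ k : Fin d, (x u v k) ^ 2 := by
  classical
  set X : Fin r × Fin r × Fin d → Ω → ℝ := fun p ω => F ω p.1 p.2.1 p.2.2 with hXdef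
  have hXmeas : ∀ p, Measurable (X p) := fun p => hmeas p.1 p.2.1 p.2.2
  have hXlaw : ∀ p, Measure.map (X p) ℙ = gaussianReal 0 (ν ^ 2).toNNReal :=
    fun p => hGauss p.1 p.2.1 p.2.2
  set c : ZMod n → ZMod n → Fin r × Fin r × Fin d → ℝ := fun u v p =>
    x (u - ((p.1 : ℕ) : ZMod n)) (v - ((p.2.1 : ℕ) : ZMod n)) p.2.2 with hcdef
  have hconv : ∀ (ω : Ω) (u v : ZMod n),
      cconv (F ω) x u v = ∑ p : Fin r × Fin r × Fin d, c u v p * X p ω := by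
    intro ω u v
    rw [cconv]
    rw [Fintype.sum_prod_type]
    refine Finset.sum_congr rfl fun i _ => ?_
    rw [Fintype.sum_prod_type]
    refine Finset.sum_congr rfl fun j _ => Finset.sum_congr rfl fun k _ => mul_comm _ _
  -- MemLp of the linear combinations, for integrability of each summand
  have hXmem : ∀ p, MemLp (X p) 2 ℙ := by
    intro p
    have h := aux_memLp_id (ν ^ 2).toNNReal
    rw [← hXlaw p] at h
    exact (memLp_map_measure_iff aestronglyMeasurable_id (hXmeas p).aemeasurable).1 h
  have hG2 : ∀ (u v : ZMod n),
      MemLp (fun ω => ∑ p : Fin r × Fin r × Fin d, c u v p * X p ω) 2 ℙ := by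
    intro u v
    have h : (fun ω => ∑ p : Fin r × Fin r × Fin d, c u v p * X p ω)
        = ∑ p : Fin r × Fin r × Fin d, fun ω => c u v p * X p ω := by
      funext ω; simp
    rw [h]
    exact memLp_finset_sum' _ fun p _ => ((hXmem p).const_mul (c u v p))
  have hintuv : ∀ (u v : ZMod n),
      Integrable (fun ω => σ (cconv (F ω) x u v) ^ 2) ℙ := by
    intro u v
    have h : (fun ω => σ (cconv (F ω) x u v) ^ 2)
        = fun ω => σ ((fun ω => ∑ p : Fin r × Fin r × Fin d, c u v p * X p ω) ω) ^ 2 := by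
      funext ω; rw [hconv ω u v]
    rw [h]
    exact aux_integrable_sig σ hσmeas hhom
      (Finset.measurable_sum _ fun p _ => (hXmeas p).const_mul _) (hG2 u v)
  -- swap integral and sums
  rw [integral_finset_sum _ fun u _ => integrable_finset_sum _ fun v _ => hintuv u v]
  have hswap : ∀ u : ZMod n, ∫ ω, ∑ v : ZMod n, σ (cconv (F ω) x u v) ^ 2
      = ∑ v : ZMod n, ∫ ω, σ (cconv (F ω) x u v) ^ 2 := fun u =>
    integral_finset_sum _ fun v _ => hintuv u v
  simp_rw [hswap]
  -- per-pixel value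
  have hterm : ∀ (u v : ZMod n), ∫ ω, σ (cconv (F ω) x u v) ^ 2
      = ν ^ 2 * (∫ z, σ z ^ 2 ∂gaussianReal 0 1)
          * ∑ p : Fin r × Fin r × Fin d, c u v p ^ 2 := by
    intro u v
    have h : (fun ω => σ (cconv (F ω) x u v) ^ 2)
        = fun ω => σ (∑ p : Fin r × Fin r × Fin d, c u v p * X p ω) ^ 2 := by
      funext ω; rw [hconv ω u v]
    rw [h]
    exact aux_main σ hσmeas hhom ν hν X hXmeas hXlaw hindep (c u v)
  simp_rw [hterm]
  -- index gymnastics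
  have h1 : ∀ (G : ZMod n → ℝ) (a : ZMod n), ∑ u : ZMod n, G (u - a) = ∑ u, G u :=
    fun G a => Fintype.sum_bijective _ (Equiv.subRight a).bijective _ _ fun u => rfl
  have hcount : ∑ u : ZMod n, ∑ v : ZMod n, ∑ p : Fin r × Fin r × Fin d, c u v p ^ 2
      = (r : ℝ) ^ 2 * ∑ u : ZMod n, ∑ v : ZMod n, ∑ k : Fin d, x u v k ^ 2 := by
    calc ∑ u : ZMod n, ∑ v : ZMod n, ∑ p : Fin r × Fin r × Fin d, c u v p ^ 2
        = ∑ u : ZMod n, ∑ p : Fin r × Fin r × Fin d, ∑ v : ZMod n, c u v p ^ 2 :=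
          Finset.sum_congr rfl fun u _ => Finset.sum_comm
      _ = ∑ p : Fin r × Fin r × Fin d, ∑ u : ZMod n, ∑ v : ZMod n, c u v p ^ 2 :=
          Finset.sum_comm
      _ = ∑ p : Fin r × Fin r × Fin d, ∑ u : ZMod n, ∑ v : ZMod n, x u v p.2.2 ^ 2 := by
          refine Finset.sum_congr rfl fun p _ => ?_
          calc ∑ u : ZMod n, ∑ v : ZMod n,
                x (u - ((p.1 : ℕ) : ZMod n)) (v - ((p.2.1 : ℕ) : ZMod n)) p.2.2 ^ 2
              = ∑ u : ZMod n, ∑ v : ZMod n,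
                x (u - ((p.1 : ℕ) : ZMod n)) v p.2.2 ^ 2 := by
                refine Finset.sum_congr rfl fun u _ => ?_
                exact h1 (fun v => x (u - ((p.1 : ℕ) : ZMod n)) v p.2.2 ^ 2) _
            _ = ∑ u : ZMod n, ∑ v : ZMod n, x u v p.2.2 ^ 2 :=
                h1 (fun u => ∑ v : ZMod n, x u v p.2.2 ^ 2) _
      _ = ∑ i : Fin r, ∑ j : Fin r, ∑ k : Fin d,
            ∑ u : ZMod n, ∑ v : ZMod n, x u v k ^ 2 := by
          rw [Fintype.sum_prod_type]
          exact Finset.sum_congr rfl fun i _ => Fintype.sum_prod_type _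
      _ = (r : ℝ) ^ 2 * ∑ k : Fin d, ∑ u : ZMod n, ∑ v : ZMod n, x u v k ^ 2 := by
          simp only [Finset.sum_const, Finset.card_univ, Fintype.card_fin, nsmul_eq_mul]
          push_cast
          ring
      _ = (r : ℝ) ^ 2 * ∑ u : ZMod n, ∑ v : ZMod n, ∑ k : Fin d, x u v k ^ 2 := by
          congr 1
          rw [Finset.sum_comm]
          exact Finset.sum_congr rfl fun u _ => Finset.sum_comm
  simp_rw [← Finset.mul_sum]
  rw [hcount]
  ring
end

section
/- Let $A$ and $B$ be axis-aligned rectangles in $\mathbb{Z}_n\times\mathbb{Z}_n$ whose intersection is a rectangle of size $e \times f$ with $e, f \geq 2r$ (and all rectangles far from wrap-around). Then the shared $r$-boundary satisfies $|\partial_r(A, B)| = 4r(e + f)$. -/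
/-- The shared `r`-boundary of two sets of pixels `A, B ⊆ ℤ × ℤ` (the plane
models pictures far from wrap-around): all pixels whose centered
`(2r+1) × (2r+1)` square intersects both `A` and `B`, and is not contained in
`A` or not contained in `B`. -/
def boundaryZ (r : ℕ) (A B : Set (ℤ × ℤ)) : Set (ℤ × ℤ) :=
  {p | ((∃ a ∈ Set.Icc (-(r : ℤ)) r, ∃ b ∈ Set.Icc (-(r : ℤ)) r,
          (p.1 + a, p.2 + b) ∈ A) ∧
        ∃ c ∈ Set.Icc (-(r : ℤ)) r, ∃ d ∈ Set.Icc (-(r : ℤ)) r,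
          (p.1 + c, p.2 + d) ∈ B) ∧
      ((∃ a ∈ Set.Icc (-(r : ℤ)) r, ∃ b ∈ Set.Icc (-(r : ℤ)) r,
          (p.1 + a, p.2 + b) ∉ A) ∨
        ∃ c ∈ Set.Icc (-(r : ℤ)) r, ∃ d ∈ Set.Icc (-(r : ℤ)) r,
          (p.1 + c, p.2 + d) ∉ B)}

/-- For axis-aligned rectangles `A` and `B` whose intersection is a rectangle
of size `e × f` with `e, f ≥ 2r`, the shared `r`-boundary has exactly
`4r(e + f)` pixels. -/
theorem stmt_15 (r : ℕ) (a₁ a₂ b₁ b₂ c₁ c₂ d₁ d₂ e f : ℤ)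
    (A B : Set (ℤ × ℤ))
    (hA : A = Set.Icc a₁ a₂ ×ˢ Set.Icc b₁ b₂)
    (hB : B = Set.Icc c₁ c₂ ×ˢ Set.Icc d₁ d₂)
    (he : min a₂ c₂ - max a₁ c₁ + 1 = e)
    (hf : min b₂ d₂ - max b₁ d₁ + 1 = f)
    (hre : 2 * (r : ℤ) ≤ e) (hrf : 2 * (r : ℤ) ≤ f) :
    ((boundaryZ r A B).ncard : ℤ) = 4 * r * (e + f) := by
  rcases Nat.eq_zero_or_pos r with hr | hr
  · subst hr
    have hempty : boundaryZ 0 A B = ∅ := by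
      ext ⟨x, y⟩
      simp only [boundaryZ, Set.mem_setOf_eq, Nat.cast_zero, neg_zero, Set.Icc_self,
        Set.mem_singleton_iff, Set.mem_empty_iff_false, iff_false]
      rintro ⟨⟨⟨a, rfl, b, rfl, hab⟩, ⟨c, rfl, d, rfl, hcd⟩⟩, h⟩
      rcases h with ⟨a, rfl, b, rfl, h⟩ | ⟨c, rfl, d, rfl, h⟩ <;> exact h ‹_›
    rw [hempty]
    simp
  · set α := max a₁ c₁ with hα
    set β := min a₂ c₂ with hβ
    set γ := max b₁ d₁ with hγ
    set δ := min b₂ d₂ with hδ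
    have hr1 : (1 : ℤ) ≤ r := by exact_mod_cast hr
    have key : boundaryZ r A B =
        (Set.Icc (α - r) (β + r) ×ˢ Set.Icc (γ - r) (δ + r)) \
        (Set.Icc (α + r) (β - r) ×ˢ Set.Icc (γ + r) (δ - r)) := by
      ext ⟨x, y⟩
      simp only [boundaryZ, Set.mem_setOf_eq, hA, hB, Set.mem_prod, Set.mem_Icc,
        Set.mem_diff]
      constructor
      · rintro ⟨⟨⟨a, ha, b, hb, hab⟩, ⟨c, hc, d, hd, hcd⟩⟩, hnot⟩
        refine ⟨⟨⟨by omega, by omega⟩, by omega, by omega⟩, ?_⟩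
        rintro ⟨⟨hx1, hx2⟩, hy1, hy2⟩
        rcases hnot with ⟨a', ha', b', hb', h⟩ | ⟨c', hc', d', hd', h⟩ <;>
          exact h ⟨⟨by omega, by omega⟩, by omega, by omega⟩
      · rintro ⟨⟨⟨hx1, hx2⟩, hy1, hy2⟩, hni⟩
        refine ⟨⟨⟨max (a₁ - x) (min 0 (a₂ - x)), by omega,
                  max (b₁ - y) (min 0 (b₂ - y)), by omega, by omega⟩,
                 ⟨max (c₁ - x) (min 0 (c₂ - x)), by omega,
                  max (d₁ - y) (min 0 (d₂ - y)), by omega, by omega⟩⟩, ?_⟩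
        have hd : x < α + r ∨ β - r < x ∨ y < γ + r ∨ δ - r < y := by omega
        rcases hd with h | h | h | h
        · rcases le_or_gt (a₁ + r) x with h' | h'
          · have : x < c₁ + r := by omega
            exact Or.inr ⟨-r, by omega, 0, by omega, by omega⟩
          · exact Or.inl ⟨-r, by omega, 0, by omega, by omega⟩
        · rcases le_or_gt x (a₂ - r) with h' | h'
          · have : c₂ - r < x := by omega
            exact Or.inr ⟨r, by omega, 0, by omega, by omega⟩
          · exact Or.inl ⟨r, by omega, 0, by omega, by omega⟩
        · rcases le_or_gt (b₁ + r) y with h' | h'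
          · have : y < d₁ + r := by omega
            exact Or.inr ⟨0, by omega, -r, by omega, by omega⟩
          · exact Or.inl ⟨0, by omega, -r, by omega, by omega⟩
        · rcases le_or_gt y (b₂ - r) with h' | h'
          · have : d₂ - r < y := by omega
            exact Or.inr ⟨0, by omega, r, by omega, by omega⟩
          · exact Or.inl ⟨0, by omega, r, by omega, by omega⟩
    have hsub : (Finset.Icc (α + r) (β - r) ×ˢ Finset.Icc (γ + r) (δ - r)) ⊆
        (Finset.Icc (α - r) (β + r) ×ˢ Finset.Icc (γ - r) (δ + r)) :=
      Finset.product_subset_product (Finset.Icc_subset_Icc (by omega) (by omega))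
        (Finset.Icc_subset_Icc (by omega) (by omega))
    have hcoe : boundaryZ r A B =
        ↑((Finset.Icc (α - r) (β + r) ×ˢ Finset.Icc (γ - r) (δ + r)) \
          (Finset.Icc (α + r) (β - r) ×ˢ Finset.Icc (γ + r) (δ - r))) := by
      rw [key, Finset.coe_sdiff, Finset.coe_product, Finset.coe_product,
        Finset.coe_Icc, Finset.coe_Icc, Finset.coe_Icc, Finset.coe_Icc]
    rw [hcoe, Set.ncard_coe_finset, Finset.card_sdiff_of_subset hsub,
      Nat.cast_sub (Finset.card_le_card hsub)]
    rw [Finset.card_product, Finset.card_product, Int.card_Icc, Int.card_Icc,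
      Int.card_Icc, Int.card_Icc]
    have h1 : ((β + ↑r + 1 - (α - ↑r)).toNat : ℤ) = e + 2 * r := by omega
    have h2 : ((δ + ↑r + 1 - (γ - ↑r)).toNat : ℤ) = f + 2 * r := by omega
    have h3 : ((β - ↑r + 1 - (α + ↑r)).toNat : ℤ) = e - 2 * r := by omega
    have h4 : ((δ - ↑r + 1 - (γ + ↑r)).toNat : ℤ) = f - 2 * r := by omega
    push_cast
    rw [h1, h2, h3, h4]
    ring
end
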